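/- arXiv:1208.5058 — 5 statements merged into one kernel-verified Lean document; each statement's English description precedes it below -/
import Mathlib

section
/- Let k, ℓ, m, n be positive integers with ℓ > k ≥ 2, n > ℓ + 1, m > k + 1, and F^(k)_m = F^(ℓ)_n. Then m < 2n. -/
/-- `gfib k i` is the `k`-generalized Fibonacci number `F^(k)_n` with the shifted index
`i = n + k - 2`: it is `0` for `i < k - 1` (i.e. `n ≤ 0`), `1` for `i = k - 1`
(i.e. `F^(k)_1 = 1`), and for `i ≥ k` (i.e. `n ≥ 2`) it is the sum of the `k`
preceding terms. -/
def gfib (k : ℕ) (i : ℕ) : ℕ :=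
  if _h1 : i < k - 1 then 0
  else if _h2 : i = k - 1 then 1
  else ∑ j ∈ Finset.range k, gfib k (i - 1 - j)
termination_by i
decreasing_by
  simp_wf
  omega

/-- `genFib k n = F^(k)_n`, the `n`-th `k`-generalized Fibonacci number (for `n ≥ 0`). -/
def genFib (k : ℕ) (n : ℕ) : ℕ := gfib k (n + k - 2)

lemma gfib_small {k i : ℕ} (h : i < k - 1) : gfib k i = 0 := by
  rw [gfib]; simp [h]

lemma gfib_one (k : ℕ) : gfib k (k - 1) = 1 := by
  rw [gfib]; simp

lemma genFib_rec {k n : ℕ} (hk : 2 ≤ k) (hn : 2 ≤ n) :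
    genFib k n = ∑ j ∈ Finset.range k, genFib k (n - 1 - j) := by
  unfold genFib
  rw [gfib]
  have h1 : ¬ (n + k - 2 < k - 1) := by omega
  have h2 : ¬ (n + k - 2 = k - 1) := by omega
  simp only [h1, h2, dite_false]
  refine Finset.sum_congr rfl fun j hj => ?_
  simp only [Finset.mem_range] at hj
  by_cases hjn : j ≤ n - 2
  · congr 1; omega
  · have e1 : n + k - 2 - 1 - j < k - 1 := by omega
    have e2 : n - 1 - j + k - 2 < k - 1 := by omega
    rw [gfib_small e1, gfib_small e2]

lemma genFib_zero {k : ℕ} (hk : 2 ≤ k) : genFib k 0 = 0 := by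
  unfold genFib
  exact gfib_small (by omega)

lemma genFib_one {k : ℕ} (hk : 2 ≤ k) : genFib k 1 = 1 := by
  unfold genFib
  have : 1 + k - 2 = k - 1 := by omega
  rw [this, gfib_one]

lemma genFib_two {k : ℕ} (hk : 2 ≤ k) : genFib k 2 = 1 := by
  rw [genFib_rec hk le_rfl]
  obtain ⟨k', rfl⟩ : ∃ k', k = k' + 1 := ⟨k - 1, by omega⟩
  rw [Finset.sum_range_succ']
  have : ∀ j ∈ Finset.range k', genFib (k' + 1) (2 - 1 - (j + 1)) = 0 := by
    intro j _
    have : 2 - 1 - (j + 1) = 0 := by omega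
    rw [this, genFib_zero hk]
  rw [Finset.sum_congr rfl this]
  simp [genFib_one hk]

lemma genFib_ge_two_step {k : ℕ} (hk : 2 ≤ k) (a : ℕ) :
    genFib k (a + 2) + genFib k (a + 1) ≤ genFib k (a + 3) := by
  rw [genFib_rec (n := a + 3) hk (by omega)]
  obtain ⟨k', rfl⟩ : ∃ k', k = k' + 2 := ⟨k - 2, by omega⟩
  rw [Finset.sum_range_succ', Finset.sum_range_succ']
  have e0 : a + 3 - 1 - 0 = a + 2 := by omega
  have e1 : a + 3 - 1 - (0 + 1) = a + 1 := by omega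
  rw [e0, e1]
  omega

lemma genFib_le_double {k : ℕ} (hk : 2 ≤ k) (a : ℕ) :
    genFib k (a + 3) ≤ 2 * genFib k (a + 2) := by
  rw [genFib_rec (n := a + 3) hk (by omega)]
  obtain ⟨k', rfl⟩ : ∃ k', k = k' + 1 := ⟨k - 1, by omega⟩
  rw [Finset.sum_range_succ']
  have e0 : a + 3 - 1 - 0 = a + 2 := by omega
  rw [e0]
  have h1 : ∑ j ∈ Finset.range k', genFib (k' + 1) (a + 3 - 1 - (j + 1))
      ≤ genFib (k' + 1) (a + 2) := by
    rw [genFib_rec (n := a + 2) hk (by omega)]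
    refine le_trans ?_ (Finset.sum_le_sum_of_subset
      (Finset.range_subset_range.2 (by omega : k' ≤ k' + 1)))
    refine Finset.sum_le_sum fun j _ => ?_
    have : a + 3 - 1 - (j + 1) = a + 2 - 1 - j := by omega
    rw [this]
  omega

lemma fib_le_genFib {k : ℕ} (hk : 2 ≤ k) : ∀ m, Nat.fib m ≤ genFib k m := by
  have key : ∀ a, Nat.fib (a + 1) ≤ genFib k (a + 1) ∧
      Nat.fib (a + 2) ≤ genFib k (a + 2) := by
    intro a
    induction a with
    | zero => simp [genFib_one hk, genFib_two hk]
    | succ b ih =>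
      refine ⟨ih.2, ?_⟩
      have h := genFib_ge_two_step hk b
      have hf : Nat.fib (b + 3) = Nat.fib (b + 1) + Nat.fib (b + 2) :=
        Nat.fib_add_two
      show Nat.fib (b + 3) ≤ genFib k (b + 3)
      omega
  intro m
  match m with
  | 0 => simp
  | 1 => exact (key 0).1
  | (a + 2) => exact (key a).2

lemma fib_lower : ∀ a, 3 ^ a ≤ 2 ^ a * Nat.fib (a + 2) := by
  intro a
  induction a with
  | zero => simp
  | succ b ih =>
    have h1 : 3 * Nat.fib (b + 2) ≤ 2 * Nat.fib (b + 3) := by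
      have h2 : Nat.fib (b + 3) = Nat.fib (b + 1) + Nat.fib (b + 2) :=
        Nat.fib_add_two
      have h3 : Nat.fib (b + 2) = Nat.fib b + Nat.fib (b + 1) :=
        Nat.fib_add_two
      have h4 := Nat.fib_le_fib_succ (n := b)
      omega
    calc 3 ^ (b + 1) = 3 * 3 ^ b := by ring
      _ ≤ 3 * (2 ^ b * Nat.fib (b + 2)) := Nat.mul_le_mul_left 3 ih
      _ = 2 ^ b * (3 * Nat.fib (b + 2)) := by ring
      _ ≤ 2 ^ b * (2 * Nat.fib (b + 3)) := Nat.mul_le_mul_left _ h1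
      _ = 2 ^ (b + 1) * Nat.fib (b + 3) := by ring

lemma genFib_upper {k : ℕ} (hk : 2 ≤ k) : ∀ a, genFib k (a + 2) ≤ 2 ^ a := by
  intro a
  induction a with
  | zero => simp [genFib_two hk]
  | succ b ih =>
    have h := genFib_le_double hk b
    calc genFib k (b + 3) ≤ 2 * genFib k (b + 2) := h
      _ ≤ 2 * 2 ^ b := Nat.mul_le_mul_left 2 ih
      _ = 2 ^ (b + 1) := by ring

theorem m_lt_two_n (k l m n : ℕ) (hk : 2 ≤ k) (hkl : k < l)
    (hn : l + 1 < n) (hm : k + 1 < m) (heq : genFib k m = genFib l n) :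
    m < 2 * n := by
  obtain ⟨a, rfl⟩ : ∃ a, m = a + 2 := ⟨m - 2, by omega⟩
  obtain ⟨b, rfl⟩ : ∃ b, n = b + 2 := ⟨n - 2, by omega⟩
  have hl : 2 ≤ l := by omega
  have key : 3 ^ a ≤ 2 ^ (a + b) := by
    calc 3 ^ a ≤ 2 ^ a * Nat.fib (a + 2) := fib_lower a
      _ ≤ 2 ^ a * genFib k (a + 2) := Nat.mul_le_mul_left _ (fib_le_genFib hk _)
      _ = 2 ^ a * genFib l (b + 2) := by rw [heq]
      _ ≤ 2 ^ a * 2 ^ b := Nat.mul_le_mul_left _ (genFib_upper hl b)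
      _ = 2 ^ (a + b) := by rw [pow_add]
  by_contra hcon
  have ha : 2 * b + 2 ≤ a := by omega
  have ha1 : 1 ≤ a := by omega
  have h9 : 9 ^ a ≤ 2 ^ (2 * a + 2 * b) := by
    calc 9 ^ a = 3 ^ a * 3 ^ a := by rw [← mul_pow]; norm_num
      _ ≤ 2 ^ (a + b) * 2 ^ (a + b) := Nat.mul_le_mul key key
      _ = 2 ^ (2 * a + 2 * b) := by rw [← pow_add]; congr 1; omega
  have h8 : 2 ^ (2 * a + 2 * b) ≤ 8 ^ a := by
    calc 2 ^ (2 * a + 2 * b) ≤ 2 ^ (3 * a) := Nat.pow_le_pow_right (by norm_num) (by omega)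
      _ = 8 ^ a := by rw [pow_mul]; norm_num
  have hlt : 8 ^ a < 9 ^ a := Nat.pow_lt_pow_left (by norm_num) (by omega)
  omega
end

section
/- Let k ≥ 2 be an integer and let α = α(k) be the dominant root for k. Then g(α, k) > 1/4; moreover α > 3/2 and 2 + (k + 1)(α − 2) < 2. -/
/-- `g x y = (x - 1)/(2 + (y + 1)(x - 2))`. -/
noncomputable def g (x y : ℝ) : ℝ := (x - 1) / (2 + (y + 1) * (x - 2))

lemma pow_three_half_ge (k : ℕ) (hk : 2 ≤ k) : ((k : ℝ) + 1) / 2 ≤ (3 / 2 : ℝ) ^ k := by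
  induction k with
  | zero => omega
  | succ n ih =>
    rcases Nat.lt_or_ge n 2 with h | h
    · interval_cases n
      · omega
      · norm_num
    · have hn := ih h
      have hn2 : (2 : ℝ) ≤ n := by exact_mod_cast h
      push_cast
      rw [pow_succ]
      linarith

theorem g_alpha_gt_quarter (k : ℕ) (hk : 2 ≤ k)
    (α : ℝ) (hα1 : 1 < α) (hα2 : α < 2)
    (hαroot : α ^ k = ∑ j ∈ Finset.range k, α ^ j) :
    g α k > 1 / 4 ∧ α > 3 / 2 ∧ 2 + ((k : ℝ) + 1) * (α - 2) < 2 := by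
  have hgeom := geom_sum_mul α k
  have hE : α ^ k * (2 - α) = 1 := by
    rw [← hαroot] at hgeom; nlinarith [hgeom]
  have h2α : 0 < 2 - α := by linarith
  -- α > 3/2
  have hα32 : 3 / 2 < α := by
    by_contra h
    push_neg at h
    have h2k : α ^ 2 ≤ α ^ k := pow_le_pow_right₀ (le_of_lt hα1) hk
    have : α ^ 2 * (2 - α) ≤ α ^ k * (2 - α) :=
      mul_le_mul_of_nonneg_right h2k (le_of_lt h2α)
    rw [hE] at this
    nlinarith [mul_pos (sub_pos.mpr hα1) (show (0:ℝ) < 1 + α - α ^ 2 by nlinarith)]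
  -- α^k > (k+1)/2
  have hk0 : k ≠ 0 := by omega
  have hpow : ((k : ℝ) + 1) / 2 < α ^ k :=
    lt_of_le_of_lt (pow_three_half_ge k hk) (pow_lt_pow_left₀ hα32 (by norm_num) hk0)
  -- denominator positive
  have hαk : (0 : ℝ) < α ^ k := pow_pos (by linarith) k
  have hD : 0 < 2 + ((k : ℝ) + 1) * (α - 2) := by
    have : ((k : ℝ) + 1) * (2 - α) < 2 := by
      have := mul_lt_mul_of_pos_right hpow h2α
      rw [hE] at this  -- wrong direction? careful
      nlinarith [hE, mul_pos hαk h2α]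
    linarith
  have hneg : ((k : ℝ) + 1) * (α - 2) < 0 := by
    apply mul_neg_of_pos_of_neg
    · positivity
    · linarith
  refine ⟨?_, hα32, by linarith⟩
  unfold g
  rw [gt_iff_lt, lt_div_iff₀ hD]
  nlinarith
end

section
/- Let k ≥ 2 be an integer, let α = α(k) be the dominant root for k, and let m, n be integers with m ≥ 1 and n ≥ 5. Then 2^{n−2} ≠ g(α, k)·α^{m−1}. -/
open Polynomial

noncomputable def Complex.abs : AbsoluteValue ℂ ℝ := IsAbsoluteValue.toAbsoluteValue (norm : ℂ → ℝ)

lemma Complex.abs_apply' (z : ℂ) : Complex.abs z = ‖z‖ := rfl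

lemma Complex.abs_two : Complex.abs 2 = 2 := by simp [Complex.abs_apply']

lemma Complex.abs_ofReal (r : ℝ) : Complex.abs r = |r| := by simp [Complex.abs_apply']

lemma Complex.sq_abs (z : ℂ) : Complex.abs z ^ 2 = Complex.normSq z := Complex.sq_norm z

lemma Complex.re_le_abs (z : ℂ) : z.re ≤ Complex.abs z := Complex.re_le_norm z


/-- Two distinct positive reals cannot both satisfy `t^k = ∑_{j<k} t^j`. -/
lemma two_roots_false (k : ℕ) (hk : 1 ≤ k) {s t : ℝ} (h0 : 0 < s) (hst : s < t)
    (hs : s ^ k = ∑ j ∈ Finset.range k, s ^ j)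
    (ht : t ^ k = ∑ j ∈ Finset.range k, t ^ j) : False := by
  have key : ∀ j ∈ Finset.range k, t ^ j * s ^ k < s ^ j * t ^ k := by
    intro j hj
    rw [Finset.mem_range] at hj
    have h1 : s ^ (k - j) < t ^ (k - j) :=
      pow_lt_pow_left₀ hst h0.le (by omega : k - j ≠ 0)
    have ht0 : (0:ℝ) < t := h0.trans hst
    have h2 : (0:ℝ) < s ^ j * t ^ j := mul_pos (pow_pos h0 j) (pow_pos ht0 j)
    have hsk : s ^ k = s ^ j * s ^ (k - j) := by rw [← pow_add]; congr 1; omega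
    have htk : t ^ k = t ^ j * t ^ (k - j) := by rw [← pow_add]; congr 1; omega
    rw [hsk, htk]
    have h3 := mul_pos h2 (sub_pos.mpr h1)
    nlinarith [h3]
  have hsum := Finset.sum_lt_sum_of_nonempty ⟨0, Finset.mem_range.mpr (by omega)⟩ key
  rw [← Finset.sum_mul, ← Finset.sum_mul, ← hs, ← ht, mul_comm] at hsum
  exact lt_irrefl _ hsum

/-- Any complex root of `x^k = ∑_{j<k} x^j` other than the dominant root has modulus ≤ 1. -/
lemma abs_le_one_of_root (k : ℕ) (hk : 2 ≤ k) (α : ℝ) (hα1 : 1 < α) (hα2 : α < 2)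
    (hαroot : α ^ k = ∑ j ∈ Finset.range k, α ^ j)
    (z : ℂ) (hz : z ^ k = ∑ j ∈ Finset.range k, z ^ j) (hne : z ≠ (α:ℂ)) :
    Complex.abs z ≤ 1 := by
  by_contra hcon
  push_neg at hcon
  set r := Complex.abs z with hr
  have hr1 : 1 < r := hcon
  have hr0 : 0 < r := by linarith
  have hrk : (0:ℝ) < r ^ k := pow_pos hr0 k
  -- z^k * (2 - z) = 1
  have hgz : (∑ j ∈ Finset.range k, z ^ j) * (z - 1) = z ^ k - 1 := geom_sum_mul z k
  rw [← hz] at hgz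
  have hz2 : z ^ k * (2 - z) = 1 := by linear_combination -hgz
  have habs : r ^ k * Complex.abs (2 - z) = 1 := by
    have h := congrArg Complex.abs hz2
    rw [map_mul, map_pow] at h
    simpa using h
  -- |z|^k ≤ sum of |z|^j
  have hA : r ^ k * (r - 1) ≤ r ^ k - 1 := by
    have h1 : r ^ k ≤ ∑ j ∈ Finset.range k, r ^ j := by
      calc r ^ k = Complex.abs (z ^ k) := by rw [map_pow]
        _ = Complex.abs (∑ j ∈ Finset.range k, z ^ j) := by rw [hz]
        _ ≤ ∑ j ∈ Finset.range k, Complex.abs (z ^ j) := by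
            exact AbsoluteValue.sum_le _ _ _
        _ = ∑ j ∈ Finset.range k, r ^ j := by simp [map_pow, hr]
    have h2 : (∑ j ∈ Finset.range k, r ^ j) * (r - 1) = r ^ k - 1 := geom_sum_mul r k
    calc r ^ k * (r - 1) ≤ (∑ j ∈ Finset.range k, r ^ j) * (r - 1) := by
          exact mul_le_mul_of_nonneg_right h1 (by linarith)
      _ = r ^ k - 1 := h2
  have hrlt2 : r < 2 := by nlinarith [hA, hrk]
  have hzre : z.re ≤ r := Complex.re_le_abs z
  have hsqabs : (Complex.abs (2 - z))^2 = (2 - z.re)^2 + z.im^2 := by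
    rw [Complex.sq_abs, Complex.normSq_apply]
    simp [Complex.sub_re, Complex.sub_im]
    ring
  have habsnn : (0:ℝ) ≤ Complex.abs (2 - z) := AbsoluteValue.nonneg _ _
  have hd1 : (2 - r)^2 ≤ (Complex.abs (2 - z))^2 := by
    rw [hsqabs]
    nlinarith [sq_nonneg z.im,
      mul_nonneg (sub_nonneg.mpr hzre) (by linarith : (0:ℝ) ≤ 4 - r - z.re)]
  have h4 : 2 - r ≤ Complex.abs (2 - z) := by
    nlinarith [hd1, habsnn, hrlt2]
  have hroot_r : r ^ k * (2 - r) = 1 := by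
    have hB : r ^ k * (2 - r) ≤ 1 := by nlinarith [habs, hrk, h4]
    have hC : 1 ≤ r ^ k * (2 - r) := by nlinarith [hA]
    linarith
  -- r satisfies the same equation as α
  have hrroot : r ^ k = ∑ j ∈ Finset.range k, r ^ j := by
    have hg : (∑ j ∈ Finset.range k, r ^ j) * (r - 1) = r ^ k - 1 := geom_sum_mul r k
    have hfac : (r ^ k - ∑ j ∈ Finset.range k, r ^ j) * (r - 1) = 0 := by
      rw [sub_mul, hg]
      nlinarith [hroot_r]
    rcases mul_eq_zero.mp hfac with h | h
    · linarith [sub_eq_zero.mp h]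
    · linarith [sub_eq_zero.mp h]
  have hrα : r = α := by
    rcases lt_trichotomy r α with hlt | heq | hgt
    · exact absurd (two_roots_false k (by omega) hr0 hlt hrroot hαroot) (by simp)
    · exact heq
    · exact absurd (two_roots_false k (by omega) (by linarith : (0:ℝ) < α) hgt hαroot hrroot)
        (by simp)
  -- equality analysis: z must be real equal to α
  have hgα : (∑ j ∈ Finset.range k, α ^ j) * (α - 1) = α ^ k - 1 := geom_sum_mul α k
  rw [← hαroot] at hgα
  have hα2k : α ^ k * (2 - α) = 1 := by linear_combination -hgα
  have hαkpos : (0:ℝ) < α ^ k := pow_pos (by linarith) k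
  have habseq : Complex.abs (2 - z) = 2 - α := by
    rw [hrα] at habs
    exact mul_left_cancel₀ (ne_of_gt hαkpos) (habs.trans hα2k.symm)
  have h3 : (2 - z.re)^2 + z.im^2 = (2 - α)^2 := by
    rw [← hsqabs, habseq]
  have hzrea : z.re ≤ α := by rw [← hrα]; exact hzre
  have hfacnn : 0 ≤ (α - z.re) * (4 - α - z.re) :=
    mul_nonneg (by linarith) (by linarith)
  have him2 : z.im ^ 2 ≤ 0 := by nlinarith [h3, hfacnn]
  have him : z.im = 0 := by
    have : z.im ^ 2 = 0 := le_antisymm him2 (sq_nonneg z.im)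
    exact sq_eq_zero_iff.mp this
  have h5 : (α - z.re) * (4 - α - z.re) = 0 := by linear_combination h3 - z.im * him
  have hre : z.re = α := by
    rcases mul_eq_zero.mp h5 with h | h
    · linarith
    · linarith
  exact hne (Complex.ext (by simpa using hre) (by simpa using him))

theorem power_of_two_ne_dominant_term (k m n : ℕ) (hk : 2 ≤ k)
    (α : ℝ) (hα1 : 1 < α) (hα2 : α < 2)
    (hαroot : α ^ k = ∑ j ∈ Finset.range k, α ^ j)
    (hm : 1 ≤ m) (hn : 5 ≤ n) :
    (2 : ℝ) ^ (n - 2) ≠ g α k * α ^ (m - 1) := by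
  intro heq
  set N := n - 2 with hN
  have hN3 : 3 ≤ N := by omega
  set M := m - 1 with hM
  have h2N : (0:ℝ) < 2 ^ N := by positivity
  -- the denominator of `g` is nonzero
  have hDne : 2 + ((k:ℝ) + 1) * (α - 2) ≠ 0 := by
    intro h
    rw [g, h, div_zero, zero_mul] at heq
    linarith
  have heq' : (α - 1) * α ^ M = 2 ^ N * (2 + ((k:ℝ) + 1) * (α - 2)) := by
    rw [g] at heq
    field_simp at heq
    linarith
  -- the first polynomial
  set P1 : ℚ[X] := X ^ k - ∑ j ∈ Finset.range k, X ^ j with hP1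
  have haev1 : aeval α P1 = 0 := by
    have h : (aeval α) P1 = α ^ k - ∑ j ∈ Finset.range k, α ^ j := by
      simp [hP1]
    rw [h, hαroot, sub_self]
  have hP1ne : P1 ≠ 0 := by
    intro h
    have h2 := congrArg (fun p => Polynomial.coeff p k) h
    simp [hP1, Polynomial.coeff_X_pow, Polynomial.finset_sum_coeff] at h2
  have halg : IsIntegral ℚ α := IsAlgebraic.isIntegral ⟨P1, hP1ne, haev1⟩
  -- irrationality of α
  have hir : ∀ q : ℚ, α ≠ (q:ℝ) := by
    intro q hq
    have hrel : α ^ (k+1) - 2 * α ^ k + 1 = 0 := by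
      have hg := geom_sum_mul α k
      rw [← hαroot] at hg
      linear_combination hg
    have hq2 : (q:ℝ) ^ (k+1) - 2 * (q:ℝ) ^ k + 1 = 0 := by rw [← hq]; exact hrel
    have hq3 : q ^ (k+1) - 2 * q ^ k + 1 = 0 := by exact_mod_cast hq2
    have hint : IsIntegral ℤ q := by
      refine ⟨X ^ (k+1) - (C 2 * X ^ k - 1), ?_, ?_⟩
      · apply monic_X_pow_sub
        have h1 : (C (2:ℤ) * X ^ k - 1).degree ≤ (k : WithBot ℕ) := by
          refine le_trans (degree_sub_le _ _) ?_
          rw [degree_C_mul_X_pow k (two_ne_zero), degree_one]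
          simp
        exact lt_of_le_of_lt h1 (by exact_mod_cast Nat.lt_succ_self k)
      · simp only [eval₂_sub, eval₂_X_pow, eval₂_mul, eval₂_C, eval₂_one]
        have h2 : (algebraMap ℤ ℚ) 2 = 2 := by norm_num
        rw [h2]
        linear_combination hq3
    obtain ⟨y, hy⟩ := IsIntegrallyClosed.isIntegral_iff.mp hint
    have hyq : ((y:ℚ)) = q := by exact_mod_cast hy
    have hq1 : (1:ℚ) < q := by
      have : (1:ℝ) < (q:ℝ) := by rw [← hq]; exact hα1
      exact_mod_cast this
    have hq2' : q < 2 := by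
      have : (q:ℝ) < 2 := by rw [← hq]; exact hα2
      exact_mod_cast this
    have h3 : (1:ℤ) < y := by rw [← hyq] at hq1; exact_mod_cast hq1
    have h4 : y < 2 := by rw [← hyq] at hq2'; exact_mod_cast hq2'
    omega
  -- minimal polynomial has degree at least 2
  have hdeg2 : 2 ≤ (minpoly ℚ α).natDegree := by
    by_contra hle
    push_neg at hle
    have hd1 : (minpoly ℚ α).natDegree = 1 := by
      have := minpoly.natDegree_pos halg
      omega
    have hmon : (minpoly ℚ α).Monic := minpoly.monic halg
    have heqμ : minpoly ℚ α = X + C ((minpoly ℚ α).coeff 0) := hmon.eq_X_add_C hd1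
    have haevμ := minpoly.aeval ℚ α
    rw [heqμ] at haevμ
    simp only [map_add, aeval_X, aeval_C] at haevμ
    refine hir (-((minpoly ℚ α).coeff 0)) ?_
    push_cast
    have h5 : (algebraMap ℚ ℝ) ((minpoly ℚ α).coeff 0) = (((minpoly ℚ α).coeff 0 : ℚ) : ℝ) := rfl
    rw [h5] at haevμ
    linarith
  -- the second polynomial
  set P2 : ℚ[X] := (X - 1) * X ^ M - C ((2:ℚ) ^ N) * (2 + C ((k:ℚ) + 1) * (X - 2)) with hP2
  have haev2 : aeval α P2 = 0 := by
    have h : (aeval α) P2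
        = (α - 1) * α ^ M - ((2:ℝ) ^ N) * (2 + ((k:ℝ) + 1) * (α - 2)) := by
      simp [hP2, map_ofNat]
      try push_cast
      try ring
    rw [h, heq', sub_self]
  -- roots of the minimal polynomial over ℂ
  have hμ0 : minpoly ℚ α ≠ 0 := minpoly.ne_zero halg
  set μc : ℂ[X] := (minpoly ℚ α).map (algebraMap ℚ ℂ) with hμc
  have hμc0 : μc ≠ 0 := (Polynomial.map_ne_zero_iff (algebraMap ℚ ℂ).injective).mpr hμ0
  have hsplits : Splits μc := IsAlgClosed.splits _
  have hcard : μc.roots.card = (minpoly ℚ α).natDegree := by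
    rw [← hsplits.natDegree_eq_card_roots]; exact natDegree_map _
  have hnodup : μc.roots.Nodup :=
    Polynomial.nodup_roots ((minpoly.irreducible halg).separable.map)
  have hexists : ∃ z ∈ μc.roots, z ≠ ((α : ℂ)) := by
    by_contra hall
    push_neg at hall
    have hsub : μc.roots.toFinset ⊆ {((α : ℂ))} := by
      intro x hx
      rw [Multiset.mem_toFinset] at hx
      simp [hall x hx]
    have h1 := Finset.card_le_card hsub
    rw [Multiset.toFinset_card_of_nodup hnodup, hcard] at h1
    simp at h1
    omega
  obtain ⟨z, hzmem, hzne⟩ := hexists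
  have hzroot : μc.eval z = 0 := ((Polynomial.mem_roots').mp hzmem).2
  have haevz : aeval z (minpoly ℚ α) = 0 := by
    rw [aeval_def, ← eval_map]
    exact hzroot
  have hP1z : aeval z P1 = 0 := by
    obtain ⟨c, hc⟩ := minpoly.dvd ℚ α haev1
    rw [hc, map_mul, haevz, zero_mul]
  have hP2z : aeval z P2 = 0 := by
    obtain ⟨c, hc⟩ := minpoly.dvd ℚ α haev2
    rw [hc, map_mul, haevz, zero_mul]
  -- unpack the two relations at z
  have hz1 : z ^ k = ∑ j ∈ Finset.range k, z ^ j := by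
    have h : (aeval z) P1 = z ^ k - ∑ j ∈ Finset.range k, z ^ j := by
      simp [hP1]
    rw [h] at hP1z
    exact sub_eq_zero.mp hP1z
  have hez : (z - 1) * z ^ M = (2:ℂ) ^ N * (2 + ((k:ℂ) + 1) * (z - 2)) := by
    have h : (aeval z) P2
        = (z - 1) * z ^ M - ((2:ℂ) ^ N) * (2 + ((k:ℂ) + 1) * (z - 2)) := by
      simp [hP2, map_ofNat]
      try push_cast
      try ring
    rw [h] at hP2z
    exact sub_eq_zero.mp hP2z
  -- the contradiction via absolute values
  have hzabs := abs_le_one_of_root k hk α hα1 hα2 hαroot z hz1 hzne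
  have habs := congrArg Complex.abs hez
  rw [map_mul, map_mul, map_pow, map_pow, Complex.abs_two] at habs
  have hlhs : Complex.abs (z - 1) * Complex.abs z ^ M ≤ 2 := by
    have h1 : Complex.abs (z - 1) ≤ 2 := by
      have := Complex.abs.sub_le_add z 1
      simp only [map_one] at this
      linarith
    have h2 : Complex.abs z ^ M ≤ 1 := pow_le_one₀ (AbsoluteValue.nonneg _ _) hzabs
    nlinarith [AbsoluteValue.nonneg Complex.abs (z - 1)]
  have hge : (8:ℝ) ≤ 2 ^ N := by
    calc (8:ℝ) = 2 ^ 3 := by norm_num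
      _ ≤ 2 ^ N := pow_le_pow_right₀ (by norm_num) hN3
  have hz2b : 1 ≤ Complex.abs (z - 2) := by
    have h := Complex.abs.le_sub 2 z
    rw [Complex.abs.map_sub 2 z, Complex.abs_two] at h
    linarith
  have hkc : Complex.abs ((k:ℂ) + 1) = (k:ℝ) + 1 := by
    have e : ((k:ℂ) + 1) = ((((k:ℝ) + 1 : ℝ)) : ℂ) := by push_cast; ring
    rw [e, Complex.abs_ofReal, abs_of_nonneg (by positivity)]
  have hden : 1 ≤ Complex.abs (2 + ((k:ℂ) + 1) * (z - 2)) := by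
    have hw : (3:ℝ) ≤ Complex.abs (((k:ℂ) + 1) * (z - 2)) := by
      rw [map_mul, hkc]
      have hk3 : (3:ℝ) ≤ (k:ℝ) + 1 := by
        have : (2:ℝ) ≤ (k:ℝ) := by exact_mod_cast hk
        linarith
      nlinarith [hz2b]
    have h := Complex.abs.le_add (((k:ℂ) + 1) * (z - 2)) 2
    rw [Complex.abs_two] at h
    have e : ((k:ℂ) + 1) * (z - 2) + 2 = 2 + ((k:ℂ) + 1) * (z - 2) := by ring
    rw [e] at h
    linarith
  have hfin : (8:ℝ) * 1 ≤ 2 ^ N * Complex.abs (2 + ((k:ℂ) + 1) * (z - 2)) :=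
    mul_le_mul hge hden (by norm_num) (by positivity)
  linarith [habs, hlhs, hfin]
end

section
/- For every integer k ≥ 2, the real number γ_k = log α(k) / log 2 is irrational, where α(k) is the dominant root for k. -/
theorem gamma_k_irrational (k : ℕ) (hk : 2 ≤ k)
    (α : ℝ) (hα1 : 1 < α) (hα2 : α < 2)
    (hαroot : α ^ k = ∑ j ∈ Finset.range k, α ^ j) :
    Irrational (Real.log α / Real.log 2) := by
  have h2 : (0:ℝ) < Real.log 2 := Real.log_pos (by norm_num)
  have hα0 : (0:ℝ) < α := by linarith
  have hlogα : 0 < Real.log α := Real.log_pos hα1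
  rintro ⟨r, hr⟩
  -- hr : (r : ℝ) = log α / log 2
  have hlogeq : Real.log α = (r:ℝ) * Real.log 2 := by
    field_simp at hr
    linarith [hr]
  have hrpos : 0 < r := by
    have h0 : (0:ℝ) < (r:ℝ) := by nlinarith [hlogeq, hlogα, h2]
    exact_mod_cast h0
  -- notation: q = denominator, p = numerator (as a natural number)
  have hq : 0 < r.den := r.pos
  have hpnum : (r.num.toNat : ℤ) = r.num := Int.toNat_of_nonneg (le_of_lt (Rat.num_pos.mpr hrpos))
  have hp1 : 1 ≤ r.num.toNat := by
    have := Rat.num_pos.mpr hrpos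
    omega
  -- key numeric identity: α ^ r.den = 2 ^ r.num.toNat
  have hqr : (r.den:ℝ) * (r:ℝ) = ((r.num.toNat : ℕ):ℝ) := by
    have h1 := Rat.mul_den_eq_num r
    have h2' : (r:ℝ) * (r.den:ℝ) = (r.num:ℝ) := by
      exact_mod_cast congrArg (Rat.cast (K := ℝ)) h1
    have h4 : ((r.num.toNat : ℕ):ℝ) = (r.num:ℝ) := by exact_mod_cast hpnum
    rw [h4]; linarith
  have key : α ^ r.den = (2:ℝ) ^ r.num.toNat := by
    have h1 : Real.log (α ^ r.den) = Real.log ((2:ℝ) ^ r.num.toNat) := by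
      rw [Real.log_pow, Real.log_pow, hlogeq]
      rw [show (r.den:ℝ) * ((r:ℝ) * Real.log 2) = ((r.den:ℝ) * (r:ℝ)) * Real.log 2 by ring, hqr]
    calc α ^ r.den = Real.exp (Real.log (α ^ r.den)) := (Real.exp_log (by positivity)).symm
      _ = Real.exp (Real.log ((2:ℝ) ^ r.num.toNat)) := by rw [h1]
      _ = (2:ℝ) ^ r.num.toNat := Real.exp_log (by positivity)
  -- α satisfies α^(k+1) = 2 α^k - 1
  have he : α ^ (k+1) = 2 * α ^ k - 1 := by
    have h := hαroot
    rw [geom_sum_eq (ne_of_gt hα1) k] at h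
    have hne : α - 1 ≠ 0 := sub_ne_zero.mpr (ne_of_gt hα1)
    field_simp at h
    rw [pow_succ]
    ring_nf at h ⊢
    linarith
  -- α is an algebraic integer
  have hint : IsIntegral ℤ α := by
    refine ⟨Polynomial.X ^ (k+1) - (Polynomial.C 2 * Polynomial.X ^ k - Polynomial.C 1), ?_, ?_⟩
    · monicity!
    · simp only [Polynomial.eval₂_sub, Polynomial.eval₂_mul, Polynomial.eval₂_pow,
        Polynomial.eval₂_X, Polynomial.eval₂_C, Polynomial.eval₂_one]
      have h2' : ((algebraMap ℤ ℝ) 2 : ℝ) = 2 := by norm_num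
      have h1' : ((algebraMap ℤ ℝ) 1 : ℝ) = 1 := by norm_num
      rw [h2', h1']
      linarith [he]
  -- α⁻¹ is an algebraic integer
  have h2int : IsIntegral ℤ (2:ℝ) :=
    ⟨Polynomial.X - Polynomial.C 2, Polynomial.monic_X_sub_C 2, by simp⟩
  have hainv : α⁻¹ = 2 * α ^ (k-1) - α ^ k := by
    have hk1 : k - 1 + 1 = k := by omega
    have hmul : α * (2 * α ^ (k-1) - α ^ k) = 1 := by
      have h1 : α * α ^ (k-1) = α ^ k := by
        rw [← pow_succ', hk1]
      have h2'' : α * α ^ k = α ^ (k+1) := (pow_succ' α k).symm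
      nlinarith [he, h1, h2'']
    exact inv_eq_of_mul_eq_one_right hmul
  have hintinv : IsIntegral ℤ (α⁻¹) := by
    rw [hainv]
    exact (h2int.mul (hint.pow _)).sub (hint.pow _)
  have hintpow : IsIntegral ℤ ((α⁻¹) ^ r.den) := hintinv.pow r.den
  have heq2 : (α⁻¹) ^ r.den = (((((2:ℚ) ^ r.num.toNat)⁻¹ : ℚ) : ℝ)) := by
    rw [inv_pow, key]
    push_cast
    ring
  rw [heq2] at hintpow
  have hratint : IsIntegral ℤ (((2:ℚ) ^ r.num.toNat)⁻¹ : ℚ) := by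
    have hmap : (((((2:ℚ) ^ r.num.toNat)⁻¹ : ℚ) : ℝ)) = algebraMap ℚ ℝ (((2:ℚ) ^ r.num.toNat)⁻¹) := rfl
    rw [hmap] at hintpow
    exact (isIntegral_algebraMap_iff (algebraMap ℚ ℝ).injective).mp hintpow
  obtain ⟨y, hy⟩ := IsIntegrallyClosed.isIntegral_iff.mp hratint
  have hy' : (y:ℚ) = ((2:ℚ) ^ r.num.toNat)⁻¹ := by exact_mod_cast hy
  have hmul1 : (y:ℚ) * 2 ^ r.num.toNat = 1 := by
    rw [hy']
    field_simp
  have hz : (y * 2 ^ r.num.toNat : ℤ) = 1 := by exact_mod_cast hmul1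
  have hdvd : (2:ℤ) ^ r.num.toNat ∣ 1 := ⟨y, by linarith [hz]⟩
  have hle : (2:ℤ) ^ r.num.toNat ≤ 1 := Int.le_of_dvd one_pos hdvd
  have h2p : (2:ℤ) ^ 1 ≤ 2 ^ r.num.toNat := pow_le_pow_right₀ (by norm_num) hp1
  linarith
end

section
/- Let M be a positive integer, let γ be an irrational real number, and let p/q be a convergent of the continued fraction expansion of γ with q > 6M. Let μ, A, B be real numbers with A > 0 and B > 1, and set ε = ‖μq‖ − M·‖γq‖, where ‖x‖ denotes the distance from the real number x to the nearest integer. If ε > 0, then there is no solution to the inequality 0 < mγ − n + μ < A·B^{−w} in positive integers m, n, w with m ≤ M and w ≥ log(Aq/ε)/log B. -/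
theorem dujella_petho (M : ℕ) (hM : 0 < M) (γ : ℝ) (hγ : Irrational γ)
    (i : ℕ) (p : ℤ) (q : ℕ)
    (hp : (p : ℝ) = (GenContFract.of γ).nums i)
    (hq : (q : ℝ) = (GenContFract.of γ).dens i)
    (hq6 : 6 * M < q)
    (μ A B : ℝ) (hA : 0 < A) (hB : 1 < B)
    (ε : ℝ)
    (hε : ε = |μ * q - round (μ * q)| - M * |γ * q - round (γ * q)|)
    (hεpos : 0 < ε) :
    ¬ ∃ m n w : ℕ, 0 < m ∧ 0 < n ∧ 0 < w ∧ m ≤ M ∧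
        Real.log (A * q / ε) / Real.log B ≤ w ∧
        0 < m * γ - n + μ ∧ m * γ - n + μ < A * B ^ (-(w : ℤ)) := by
  rintro ⟨m, n, w, hm, hn, hw, hmM, hwlog, hpos, hlt⟩
  have hq0 : (0:ℝ) < q := by
    have : 6 * M < q := hq6
    have : 0 < q := lt_of_le_of_lt (Nat.zero_le _) this
    exact_mod_cast this
  have hB0 : (0:ℝ) < B := lt_trans one_pos hB
  -- not terminated
  have hnt : ¬(GenContFract.of γ).TerminatedAt i := by
    intro h
    rcases (GenContFract.terminates_iff_rat γ).mp ⟨i, h⟩ with ⟨r, hr⟩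
    exact hγ ⟨r, hr.symm⟩
  -- approximation property of convergents
  have happrox : |γ - (GenContFract.of γ).convs i| ≤
      1 / ((GenContFract.of γ).dens i * (GenContFract.of γ).dens (i + 1)) :=
    GenContFract.abs_sub_convs_le hnt
  have hdmono : (GenContFract.of γ).dens i ≤ (GenContFract.of γ).dens (i + 1) :=
    GenContFract.of_den_mono
  have hden1 : (0:ℝ) < (GenContFract.of γ).dens (i + 1) := lt_of_lt_of_le (hq ▸ hq0) hdmono
  -- |γ*q - p| ≤ 1/q
  have hZp : |γ * q - p| ≤ 1 / q := by
    have hconv : (GenContFract.of γ).convs i = p / q := by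
      rw [GenContFract.conv_eq_num_div_den, ← hp, ← hq]
    rw [hconv, ← hq] at happrox
    have h1 : |γ - p / q| ≤ 1 / (q * (GenContFract.of γ).dens (i + 1)) := happrox
    have h2 : |γ * q - p| = |γ - p / q| * q := by
      rw [← abs_of_pos hq0, ← abs_mul]
      congr 1
      field_simp
      rw [abs_of_pos hq0]; ring
    rw [h2]
    calc |γ - p / q| * q ≤ 1 / (q * (GenContFract.of γ).dens (i + 1)) * q := by
          exact mul_le_mul_of_nonneg_right h1 (le_of_lt hq0)
      _ = 1 / (GenContFract.of γ).dens (i + 1) := by field_simp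
      _ ≤ 1 / q := by
          apply one_div_le_one_div_of_le hq0
          rw [hq]; exact hdmono
  set Z : ℝ := γ * q - round (γ * q) with hZdef
  set Y : ℝ := μ * q - round (μ * q) with hYdef
  have hZ : |Z| ≤ 1 / q := le_trans (round_le (γ * q) p) hZp
  have hY : |Y| ≤ 1 / 2 := abs_sub_round (μ * q)
  have hMZ : (M:ℝ) * |Z| < 1/6 := by
    have h6 : (6:ℝ) * M < q := by exact_mod_cast hq6
    have hM0 : (0:ℝ) < M := by exact_mod_cast hM
    calc (M:ℝ) * |Z| ≤ M * (1/q) := mul_le_mul_of_nonneg_left hZ (le_of_lt hM0)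
      _ < 1/6 := by rw [mul_one_div, div_lt_div_iff₀ hq0 (by norm_num : (0:ℝ) < 6)]; nlinarith
  -- from w ≥ log(Aq/ε)/log B : A * B^(-w) ≤ ε / q
  have hABw : A * B ^ (-(w:ℤ)) ≤ ε / q := by
    have hlogB : 0 < Real.log B := Real.log_pos hB
    have hAqε : 0 < A * q / ε := by positivity
    have h1 : Real.log (A * q / ε) ≤ w * Real.log B := by
      rw [div_le_iff₀ hlogB] at hwlog; linarith
    have h2 : A * q / ε ≤ B ^ (w:ℕ) := by
      have := Real.exp_le_exp.mpr h1
      rw [Real.exp_log hAqε] at this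
      calc A * q / ε ≤ Real.exp (w * Real.log B) := this
        _ = B ^ (w:ℕ) := by
            rw [← Real.exp_log hB0, ← Real.exp_nat_mul]
            norm_num [Real.exp_log hB0]
    have hBw : (0:ℝ) < B ^ (w:ℕ) := pow_pos hB0 w
    have : A * B ^ (-(w:ℤ)) = A / B ^ (w:ℕ) := by
      rw [zpow_neg, zpow_natCast]; ring
    rw [this, div_le_div_iff₀ hBw hq0]
    rw [div_le_iff₀ hεpos] at h2
    nlinarith
  have hlt' : m * γ - n + μ < ε / q := lt_of_lt_of_le hlt hABw
  -- multiply by q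
  have hmain : 0 < (m * γ - n + μ) * q ∧ (m * γ - n + μ) * q < ε := by
    constructor
    · exact mul_pos hpos hq0
    · have := mul_lt_mul_of_pos_right hlt' hq0
      rwa [div_mul_cancel₀ ε (ne_of_gt hq0)] at this
  -- decompose
  set K : ℤ := m * round (γ * q) + round (μ * q) - n * q with hKdef
  have hdecomp : (m * γ - n + μ) * q = (K:ℝ) + m * Z + Y := by
    simp only [hKdef, hZdef, hYdef]
    push_cast
    ring
  obtain ⟨hlow, hhigh⟩ := hmain
  rw [hdecomp] at hlow hhigh
  have hm1 : (1:ℝ) ≤ m := by exact_mod_cast hm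
  have hmM' : (m:ℝ) ≤ M := by exact_mod_cast hmM
  have hmZ : |(m:ℝ) * Z| ≤ M * |Z| := by
    rw [abs_mul, abs_of_nonneg (by positivity : (0:ℝ) ≤ (m:ℝ))]
    exact mul_le_mul_of_nonneg_right hmM' (abs_nonneg _)
  have habs1 : -(M * |Z|) ≤ (m:ℝ) * Z := neg_le_of_abs_le hmZ
  have habs2 : (m:ℝ) * Z ≤ M * |Z| := le_of_abs_le hmZ
  rcases le_or_gt 0 Y with hY0 | hY0
  · -- Y ≥ 0 : |Y| = Y
    have hYe : |Y| = Y := abs_of_nonneg hY0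
    have hKneg : (K:ℝ) < 0 := by rw [hε, hYe] at hhigh; linarith
    have hKneg' : K < 0 := by exact_mod_cast hKneg
    have hK1 : (K:ℝ) ≤ -1 := by exact_mod_cast (by omega : K ≤ -1)
    rw [hYe] at hY
    linarith
  · -- Y < 0 : |Y| = -Y
    have hYe : |Y| = -Y := abs_of_neg hY0
    have hKpos : (0:ℝ) < K := by rw [hε, hYe] at hεpos; linarith
    have hKpos' : 0 < K := by exact_mod_cast hKpos
    have hK1 : (1:ℝ) ≤ K := by exact_mod_cast (by omega : 1 ≤ K)
    rw [hε, hYe] at hhigh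
    rw [hYe] at hY
    linarith
end
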